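/- Let 𝔥 : ℝ² → ℝ be continuous, positively 1-homogeneous, with 𝔥(ν) > 0 for ν ≠ 0, continuously differentiable on ℝ² \ {0}, and strictly convex in the sense that 𝔥(tν + (1−t)μ) < t·𝔥(ν) + (1−t)·𝔥(μ) for every t ∈ (0,1) and all vectors ν, μ which are not positively parallel. Then there exist three pairwise distinct points A, B, C on the unit sphere ∂C = {v ∈ ℝ² : 𝔥(v) = 1} such that ∇𝔥(A) + ∇𝔥(B) + ∇𝔥(C) = 0. -/

import Mathlib

open scoped RealInnerProductSpace
open Set Filter Metric

noncomputable section Statement5Aux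

local notation "E" => EuclideanSpace ℝ (Fin 2)

variable {𝔥 : E → ℝ}

lemma aux_h_zero (h_homog : ∀ c : ℝ, 0 ≤ c → ∀ v : E, 𝔥 (c • v) = c * 𝔥 v) : 𝔥 0 = 0 := by
  have := h_homog 0 le_rfl 0
  simpa using this

lemma aux_subadd (h_homog : ∀ c : ℝ, 0 ≤ c → ∀ v : E, 𝔥 (c • v) = c * 𝔥 v)
    (h_strict : ∀ t ∈ Set.Ioo (0:ℝ) 1, ∀ ν μ : E,
      ¬ ((∃ l : ℝ, 0 ≤ l ∧ ν = l • μ) ∨ (∃ l : ℝ, 0 ≤ l ∧ μ = l • ν)) →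
      𝔥 (t • ν + (1 - t) • μ) < t * 𝔥 ν + (1 - t) * 𝔥 μ)
    (ν μ : E) : 𝔥 (ν + μ) ≤ 𝔥 ν + 𝔥 μ := by
  by_cases hpar : (∃ l : ℝ, 0 ≤ l ∧ ν = l • μ) ∨ (∃ l : ℝ, 0 ≤ l ∧ μ = l • ν)
  · rcases hpar with ⟨l, hl, rfl⟩ | ⟨l, hl, rfl⟩
    · rw [show l • μ + μ = (l + 1) • μ by module, h_homog _ (by linarith),
        h_homog _ hl]
      linarith
    · rw [show ν + l • ν = (l + 1) • ν by module, h_homog _ (by linarith),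
        h_homog _ hl]
      linarith
  · have h := h_strict (1/2) (by norm_num) ν μ hpar
    have h2 : 𝔥 (ν + μ) = 2 * 𝔥 ((1/2 : ℝ) • ν + (1 - 1/2 : ℝ) • μ) := by
      rw [← h_homog 2 (by norm_num)]
      congr 1
      module
    rw [h2]
    nlinarith [h]

lemma aux_diffAt (h_C1 : ContDiffOn ℝ 1 𝔥 {(0:E)}ᶜ) {v : E} (hv : v ≠ 0) :
    DifferentiableAt ℝ 𝔥 v :=
  (h_C1.contDiffAt (isOpen_compl_singleton.mem_nhds (by simpa using hv))).differentiableAt one_ne_zero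

lemma aux_hasDeriv (h_C1 : ContDiffOn ℝ 1 𝔥 {(0:E)}ᶜ) {v : E} (hv : v ≠ 0) (w : E) :
    HasDerivAt (fun t : ℝ => 𝔥 (v + t • w)) ⟪gradient 𝔥 v, w⟫ 0 := by
  have hd := (aux_diffAt h_C1 hv).hasGradientAt.hasFDerivAt
  have hline : HasDerivAt (fun t : ℝ => v + t • w) w 0 := by
    simpa using ((hasDerivAt_id (0:ℝ)).smul_const w).const_add v
  have hd' : HasFDerivAt 𝔥 (InnerProductSpace.toDual ℝ E (gradient 𝔥 v)) (v + (0:ℝ) • w) := by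
    simpa using hd
  have := hd'.comp_hasDerivAt 0 hline
  simpa [InnerProductSpace.toDual_apply_apply, Function.comp_def] using this

lemma aux_euler (h_homog : ∀ c : ℝ, 0 ≤ c → ∀ v : E, 𝔥 (c • v) = c * 𝔥 v)
    (h_C1 : ContDiffOn ℝ 1 𝔥 {(0:E)}ᶜ) {v : E} (hv : v ≠ 0) :
    ⟪gradient 𝔥 v, v⟫ = 𝔥 v := by
  have h1 := aux_hasDeriv h_C1 hv v
  have h2 : HasDerivAt (fun t : ℝ => (1 + t) * 𝔥 v) (𝔥 v) 0 := by
    simpa using ((hasDerivAt_id (0:ℝ)).const_add 1).mul_const (𝔥 v)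
  have heq : (fun t : ℝ => 𝔥 (v + t • v)) =ᶠ[nhds (0:ℝ)] (fun t => (1 + t) * 𝔥 v) := by
    filter_upwards [eventually_gt_nhds (by norm_num : (-1:ℝ) < 0)] with t ht
    rw [show v + t • v = (1 + t) • v by module, h_homog _ (by linarith)]
  exact h1.unique (h2.congr_of_eventuallyEq heq)

lemma aux_support_le (h_homog : ∀ c : ℝ, 0 ≤ c → ∀ v : E, 𝔥 (c • v) = c * 𝔥 v)
    (h_strict : ∀ t ∈ Set.Ioo (0:ℝ) 1, ∀ ν μ : E,
      ¬ ((∃ l : ℝ, 0 ≤ l ∧ ν = l • μ) ∨ (∃ l : ℝ, 0 ≤ l ∧ μ = l • ν)) →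
      𝔥 (t • ν + (1 - t) • μ) < t * 𝔥 ν + (1 - t) * 𝔥 μ)
    (h_C1 : ContDiffOn ℝ 1 𝔥 {(0:E)}ᶜ) {v : E} (hv : v ≠ 0) (w : E) :
    ⟪gradient 𝔥 v, w⟫ ≤ 𝔥 w := by
  have h1 := (aux_hasDeriv h_C1 hv w)
  rw [hasDerivAt_iff_tendsto_slope] at h1
  have h2 : Tendsto (slope (fun t : ℝ => 𝔥 (v + t • w)) 0) (nhdsWithin 0 (Set.Ioi 0))
      (nhds ⟪gradient 𝔥 v, w⟫) :=
    h1.mono_left (nhdsWithin_mono _ fun t ht => ne_of_gt ht)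
  refine le_of_tendsto h2 ?_
  filter_upwards [self_mem_nhdsWithin] with t (ht : (0:ℝ) < t)
  have hsub : 𝔥 (v + t • w) ≤ 𝔥 v + t * 𝔥 w := by
    calc 𝔥 (v + t • w) ≤ 𝔥 v + 𝔥 (t • w) := aux_subadd h_homog h_strict v (t • w)
    _ = 𝔥 v + t * 𝔥 w := by rw [h_homog t ht.le]
  rw [slope_def_field]
  rw [div_le_iff₀ (by simpa using ht)]
  simp only [zero_smul, add_zero, sub_zero]
  nlinarith [hsub]

lemma aux_grad_unique (h_C1 : ContDiffOn ℝ 1 𝔥 {(0:E)}ᶜ) {v x : E} (hv : v ≠ 0)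
    (hle : ∀ w, ⟪x, w⟫ ≤ 𝔥 w) (hxv : ⟪x, v⟫ = 𝔥 v) : x = gradient 𝔥 v := by
  have key : ∀ w, ⟪x, w⟫ = ⟪gradient 𝔥 v, w⟫ := by
    intro w
    have hlow : ∀ t : ℝ, 𝔥 v + t * ⟪x, w⟫ ≤ 𝔥 (v + t • w) := by
      intro t
      have h := hle (v + t • w)
      rw [inner_add_right, real_inner_smul_right, hxv] at h
      linarith
    have h1 := aux_hasDeriv h_C1 hv w
    rw [hasDerivAt_iff_tendsto_slope] at h1
    have hr : Tendsto (slope (fun t : ℝ => 𝔥 (v + t • w)) 0) (nhdsWithin 0 (Set.Ioi 0))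
        (nhds ⟪gradient 𝔥 v, w⟫) :=
      h1.mono_left (nhdsWithin_mono _ fun t ht => ne_of_gt ht)
    have hl : Tendsto (slope (fun t : ℝ => 𝔥 (v + t • w)) 0) (nhdsWithin 0 (Set.Iio 0))
        (nhds ⟪gradient 𝔥 v, w⟫) :=
      h1.mono_left (nhdsWithin_mono _ fun t ht => ne_of_lt ht)
    have hge : ⟪x, w⟫ ≤ ⟪gradient 𝔥 v, w⟫ := by
      refine ge_of_tendsto hr ?_
      filter_upwards [self_mem_nhdsWithin] with t (ht : (0:ℝ) < t)
      rw [slope_def_field, le_div_iff₀ (by simpa using ht)]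
      have := hlow t
      simp only [zero_smul, add_zero, sub_zero]
      nlinarith
    have hle2 : ⟪gradient 𝔥 v, w⟫ ≤ ⟪x, w⟫ := by
      refine le_of_tendsto hl ?_
      filter_upwards [self_mem_nhdsWithin] with t (ht : t < (0:ℝ))
      rw [slope_def_field, div_le_iff_of_neg (by simpa using ht)]
      have := hlow t
      simp only [zero_smul, add_zero, sub_zero]
      nlinarith
    linarith
  exact ext_inner_right ℝ key

lemma aux_grad_scale (h_homog : ∀ c : ℝ, 0 ≤ c → ∀ v : E, 𝔥 (c • v) = c * 𝔥 v)
    (h_strict : ∀ t ∈ Set.Ioo (0:ℝ) 1, ∀ ν μ : E,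
      ¬ ((∃ l : ℝ, 0 ≤ l ∧ ν = l • μ) ∨ (∃ l : ℝ, 0 ≤ l ∧ μ = l • ν)) →
      𝔥 (t • ν + (1 - t) • μ) < t * 𝔥 ν + (1 - t) * 𝔥 μ)
    (h_C1 : ContDiffOn ℝ 1 𝔥 {(0:E)}ᶜ) {v : E} (hv : v ≠ 0) {c : ℝ} (hc : 0 < c) :
    gradient 𝔥 (c • v) = gradient 𝔥 v := by
  have hcv : c • v ≠ 0 := smul_ne_zero (ne_of_gt hc) hv
  refine aux_grad_unique h_C1 hv ?_ ?_
  · exact fun w => aux_support_le h_homog h_strict h_C1 hcv w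
  · have := aux_euler h_homog h_C1 hcv
    rw [real_inner_smul_right, h_homog c hc.le] at this
    exact mul_left_cancel₀ (ne_of_gt hc) this


def gfun (𝔥 : E → ℝ) (x : E) : ℝ :=
  sSup ((fun v => ⟪x, v⟫ / 𝔥 v) '' Metric.sphere (0:E) 1)

lemma aux_sphere_ne {v : E} (hv : v ∈ Metric.sphere (0:E) 1) : v ≠ 0 := by
  intro h
  rw [mem_sphere_zero_iff_norm, h] at hv
  simp at hv

lemma aux_gfun_attain (h_cont : Continuous 𝔥) (h_pos : ∀ v : E, v ≠ 0 → 0 < 𝔥 v) (x : E) :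
    ∃ v ∈ Metric.sphere (0:E) 1, gfun 𝔥 x = ⟪x, v⟫ / 𝔥 v ∧
      ∀ w ∈ Metric.sphere (0:E) 1, ⟪x, w⟫ / 𝔥 w ≤ gfun 𝔥 x := by
  have hSne : (Metric.sphere (0:E) 1).Nonempty := NormedSpace.sphere_nonempty.mpr zero_le_one
  have hfc : ContinuousOn (fun v => ⟪x, v⟫ / 𝔥 v) (Metric.sphere (0:E) 1) := by
    apply ContinuousOn.div
    · exact (continuous_const.inner continuous_id).continuousOn
    · exact h_cont.continuousOn
    · exact fun v hv => ne_of_gt (h_pos v (aux_sphere_ne hv))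
  obtain ⟨v, hvS, hmax⟩ := (isCompact_sphere (0:E) 1).exists_isMaxOn hSne hfc
  have hgr : IsGreatest ((fun v => ⟪x, v⟫ / 𝔥 v) '' Metric.sphere (0:E) 1) (⟪x, v⟫ / 𝔥 v) := by
    constructor
    · exact Set.mem_image_of_mem _ hvS
    · rintro _ ⟨w, hw, rfl⟩
      exact hmax hw
  have hs : gfun 𝔥 x = ⟪x, v⟫ / 𝔥 v := hgr.csSup_eq
  refine ⟨v, hvS, hs, fun w hw => ?_⟩
  rw [hs]
  exact hmax hw

lemma aux_gfun_upper (h_cont : Continuous 𝔥) (h_pos : ∀ v : E, v ≠ 0 → 0 < 𝔥 v) (x : E)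
    {w : E} (hw : w ∈ Metric.sphere (0:E) 1) : ⟪x, w⟫ / 𝔥 w ≤ gfun 𝔥 x := by
  obtain ⟨v, hvS, _, hub⟩ := aux_gfun_attain h_cont h_pos x
  exact hub w hw

lemma aux_gfun_smul (h_cont : Continuous 𝔥) (h_pos : ∀ v : E, v ≠ 0 → 0 < 𝔥 v) (x : E)
    {c : ℝ} (hc : 0 ≤ c) : gfun 𝔥 (c • x) = c * gfun 𝔥 x := by
  obtain ⟨v, hvS, hv, _⟩ := aux_gfun_attain h_cont h_pos (c • x)
  obtain ⟨u, huS, hu, _⟩ := aux_gfun_attain h_cont h_pos x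
  apply le_antisymm
  · rw [hv, real_inner_smul_left, mul_div_assoc]
    exact mul_le_mul_of_nonneg_left (aux_gfun_upper h_cont h_pos x hvS) hc
  · rw [hu, ← mul_div_assoc, ← real_inner_smul_left]
    exact aux_gfun_upper h_cont h_pos (c • x) huS

lemma aux_gfun_subadd (h_cont : Continuous 𝔥) (h_pos : ∀ v : E, v ≠ 0 → 0 < 𝔥 v) (x y : E) :
    gfun 𝔥 (x + y) ≤ gfun 𝔥 x + gfun 𝔥 y := by
  obtain ⟨v, hvS, hv, _⟩ := aux_gfun_attain h_cont h_pos (x + y)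
  rw [hv, inner_add_left, add_div]
  exact add_le_add (aux_gfun_upper h_cont h_pos x hvS) (aux_gfun_upper h_cont h_pos y hvS)

lemma aux_gfun_pos (h_cont : Continuous 𝔥) (h_pos : ∀ v : E, v ≠ 0 → 0 < 𝔥 v) {x : E}
    (hx : x ≠ 0) : 0 < gfun 𝔥 x := by
  have hnx : (0:ℝ) < ‖x‖ := norm_pos_iff.mpr hx
  set v : E := ‖x‖⁻¹ • x with hv
  have hvS : v ∈ Metric.sphere (0:E) 1 := by
    rw [mem_sphere_zero_iff_norm, hv, norm_smul]
    simp [abs_of_nonneg (inv_nonneg.mpr hnx.le), inv_mul_cancel₀ (ne_of_gt hnx)]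
  have hinner : ⟪x, v⟫ = ‖x‖ := by
    rw [hv, real_inner_smul_right, real_inner_self_eq_norm_sq]
    field_simp
  have := aux_gfun_upper h_cont h_pos x hvS
  rw [hinner] at this
  exact lt_of_lt_of_le (div_pos hnx (h_pos v (aux_sphere_ne hvS))) this

lemma aux_gfun_zero (h_cont : Continuous 𝔥) (h_pos : ∀ v : E, v ≠ 0 → 0 < 𝔥 v) :
    gfun 𝔥 0 = 0 := by
  obtain ⟨v, hvS, hv, _⟩ := aux_gfun_attain h_cont h_pos 0
  rw [hv, inner_zero_left, zero_div]

lemma aux_min_h (h_cont : Continuous 𝔥) (h_pos : ∀ v : E, v ≠ 0 → 0 < 𝔥 v) :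
    ∃ m : ℝ, 0 < m ∧ ∀ v ∈ Metric.sphere (0:E) 1, m ≤ 𝔥 v := by
  have hSne : (Metric.sphere (0:E) 1).Nonempty := NormedSpace.sphere_nonempty.mpr zero_le_one
  obtain ⟨v, hvS, hmin⟩ := (isCompact_sphere (0:E) 1).exists_isMinOn hSne h_cont.continuousOn
  exact ⟨𝔥 v, h_pos v (aux_sphere_ne hvS), fun w hw => hmin hw⟩

lemma aux_gfun_le_norm (h_cont : Continuous 𝔥) (h_pos : ∀ v : E, v ≠ 0 → 0 < 𝔥 v)
    {m : ℝ} (hm : 0 < m) (hml : ∀ v ∈ Metric.sphere (0:E) 1, m ≤ 𝔥 v) (x : E) :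
    gfun 𝔥 x ≤ ‖x‖ / m := by
  obtain ⟨v, hvS, hv, _⟩ := aux_gfun_attain h_cont h_pos x
  rw [hv]
  have h1 : ⟪x, v⟫ ≤ ‖x‖ := by
    have := real_inner_le_norm x v
    rwa [mem_sphere_zero_iff_norm.mp hvS, mul_one] at this
  exact div_le_div₀ (norm_nonneg x) h1 hm (hml v hvS)

lemma aux_gfun_cont (h_cont : Continuous 𝔥) (h_pos : ∀ v : E, v ≠ 0 → 0 < 𝔥 v) :
    Continuous (gfun 𝔥) := by
  obtain ⟨m, hm, hml⟩ := aux_min_h h_cont h_pos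
  have key : ∀ x y : E, gfun 𝔥 x - gfun 𝔥 y ≤ ‖x - y‖ / m := by
    intro x y
    have h1 : gfun 𝔥 x ≤ gfun 𝔥 y + gfun 𝔥 (x - y) := by
      have := aux_gfun_subadd h_cont h_pos y (x - y)
      rwa [add_sub_cancel] at this
    have h2 := aux_gfun_le_norm h_cont h_pos hm hml (x - y)
    linarith
  rw [Metric.continuous_iff]
  intro x ε hε
  refine ⟨ε * m, by positivity, fun y hy => ?_⟩
  rw [Real.dist_eq, abs_sub_lt_iff]
  have h1 := key y x
  have h2 := key x y
  have hxy : ‖y - x‖ < ε * m := by rwa [← dist_eq_norm]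
  have hyx : ‖x - y‖ < ε * m := by rwa [← dist_eq_norm, dist_comm]
  constructor
  · calc gfun 𝔥 y - gfun 𝔥 x ≤ ‖y - x‖ / m := h1
      _ < ε := by rw [div_lt_iff₀ hm]; linarith
  · calc gfun 𝔥 x - gfun 𝔥 y ≤ ‖x - y‖ / m := h2
      _ < ε := by rw [div_lt_iff₀ hm]; linarith


lemma aux_gfun_support (h_cont : Continuous 𝔥) (h_pos : ∀ v : E, v ≠ 0 → 0 < 𝔥 v)
    (h_homog : ∀ c : ℝ, 0 ≤ c → ∀ v : E, 𝔥 (c • v) = c * 𝔥 v)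
    {x : E} (hx : gfun 𝔥 x ≤ 1) (w : E) : ⟪x, w⟫ ≤ 𝔥 w := by
  rcases eq_or_ne w 0 with rfl | hw
  · rw [inner_zero_right, aux_h_zero h_homog]
  · have hnw : (0:ℝ) < ‖w‖ := norm_pos_iff.mpr hw
    set u : E := ‖w‖⁻¹ • w with hu
    have huS : u ∈ Metric.sphere (0:E) 1 := by
      rw [mem_sphere_zero_iff_norm, hu, norm_smul]
      simp [abs_of_nonneg (inv_nonneg.mpr hnw.le), inv_mul_cancel₀ (ne_of_gt hnw)]
    have h1 : ⟪x, u⟫ / 𝔥 u ≤ 1 := le_trans (aux_gfun_upper h_cont h_pos x huS) hx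
    have h2 : ⟪x, u⟫ ≤ 𝔥 u := by
      rwa [div_le_one (h_pos u (aux_sphere_ne huS))] at h1
    have h3 : w = ‖w‖ • u := by
      rw [hu, smul_smul, mul_inv_cancel₀ (ne_of_gt hnw), one_smul]
    have e1 : ⟪x, w⟫ = ‖w‖ * ⟪x, u⟫ := by
      conv_lhs => rw [h3]
      exact real_inner_smul_right x u ‖w‖
    have e2 : 𝔥 w = ‖w‖ * 𝔥 u := by
      conv_lhs => rw [h3]
      exact h_homog _ hnw.le u
    rw [e1, e2]
    exact mul_le_mul_of_nonneg_left h2 hnw.le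

lemma aux_gfun_grad (h_cont : Continuous 𝔥) (h_pos : ∀ v : E, v ≠ 0 → 0 < 𝔥 v)
    (h_homog : ∀ c : ℝ, 0 ≤ c → ∀ v : E, 𝔥 (c • v) = c * 𝔥 v)
    (h_strict : ∀ t ∈ Set.Ioo (0:ℝ) 1, ∀ ν μ : E,
      ¬ ((∃ l : ℝ, 0 ≤ l ∧ ν = l • μ) ∨ (∃ l : ℝ, 0 ≤ l ∧ μ = l • ν)) →
      𝔥 (t • ν + (1 - t) • μ) < t * 𝔥 ν + (1 - t) * 𝔥 μ)
    (h_C1 : ContDiffOn ℝ 1 𝔥 {(0:E)}ᶜ)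
    {v : E} (hv : v ∈ Metric.sphere (0:E) 1) : gfun 𝔥 (gradient 𝔥 v) = 1 := by
  have hv0 := aux_sphere_ne hv
  apply le_antisymm
  · obtain ⟨u, huS, hu, _⟩ := aux_gfun_attain h_cont h_pos (gradient 𝔥 v)
    rw [hu, div_le_one (h_pos u (aux_sphere_ne huS))]
    exact aux_support_le h_homog h_strict h_C1 hv0 u
  · have := aux_gfun_upper h_cont h_pos (gradient 𝔥 v) hv
    rwa [aux_euler h_homog h_C1 hv0, div_self (ne_of_gt (h_pos v hv0))] at this

lemma aux_gfun_eq_one (h_cont : Continuous 𝔥) (h_pos : ∀ v : E, v ≠ 0 → 0 < 𝔥 v)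
    (h_homog : ∀ c : ℝ, 0 ≤ c → ∀ v : E, 𝔥 (c • v) = c * 𝔥 v)
    (h_C1 : ContDiffOn ℝ 1 𝔥 {(0:E)}ᶜ)
    {x : E} (hx : gfun 𝔥 x = 1) :
    ∃ v : E, v ∈ Metric.sphere (0:E) 1 ∧ x = gradient 𝔥 v := by
  obtain ⟨v, hvS, hv, _⟩ := aux_gfun_attain h_cont h_pos x
  have hv0 := aux_sphere_ne hvS
  have h1 : ⟪x, v⟫ = 𝔥 v := by
    have h : ⟪x, v⟫ / 𝔥 v = 1 := by rw [← hv, hx]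
    exact (div_eq_one_iff_eq (ne_of_gt (h_pos v hv0))).mp h
  exact ⟨v, hvS, aux_grad_unique h_C1 hv0
    (aux_gfun_support h_cont h_pos h_homog (le_of_eq hx) ) h1⟩

end Statement5Aux


open scoped RealInnerProductSpace
open Set Filter Metric

noncomputable section Statement5Aux2

local notation "E" => EuclideanSpace ℝ (Fin 2)

variable {𝔥 : E → ℝ}

lemma aux_rank : 1 < Module.rank ℝ E := by
  have h2 : Module.finrank ℝ E = 2 := finrank_euclideanSpace_fin
  rw [← Module.finrank_eq_rank, h2]
  norm_num

lemma aux_Sg_conn (h_cont : Continuous 𝔥) (h_pos : ∀ v : E, v ≠ 0 → 0 < 𝔥 v) :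
    IsConnected {y : E | gfun 𝔥 y = 1} ∧ IsCompact {y : E | gfun 𝔥 y = 1} := by
  have hgc := aux_gfun_cont h_cont h_pos
  have himg : {y : E | gfun 𝔥 y = 1} = (fun y => (gfun 𝔥 y)⁻¹ • y) '' Metric.sphere (0:E) 1 := by
    ext x
    constructor
    · intro (hx : gfun 𝔥 x = 1)
      have hx0 : x ≠ 0 := by
        intro h
        rw [h, aux_gfun_zero h_cont h_pos] at hx
        norm_num at hx
      have hnx : (0:ℝ) < ‖x‖ := norm_pos_iff.mpr hx0
      refine ⟨‖x‖⁻¹ • x, ?_, ?_⟩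
      · rw [mem_sphere_zero_iff_norm, norm_smul]
        simp [abs_of_nonneg (inv_nonneg.mpr hnx.le), inv_mul_cancel₀ (ne_of_gt hnx)]
      · show (gfun 𝔥 (‖x‖⁻¹ • x))⁻¹ • (‖x‖⁻¹ • x) = x
        rw [aux_gfun_smul h_cont h_pos x (inv_nonneg.mpr hnx.le), hx, mul_one, inv_inv,
          smul_smul, mul_inv_cancel₀ (ne_of_gt hnx), one_smul]
    · rintro ⟨y, hyS, rfl⟩
      have hy0 := aux_sphere_ne hyS
      have hgy := aux_gfun_pos h_cont h_pos hy0
      show gfun 𝔥 _ = 1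
      rw [aux_gfun_smul h_cont h_pos y (inv_nonneg.mpr hgy.le), inv_mul_cancel₀ (ne_of_gt hgy)]
  have hFc : ContinuousOn (fun y : E => (gfun 𝔥 y)⁻¹ • y) (Metric.sphere (0:E) 1) := by
    refine ContinuousOn.smul (f := fun y : E => (gfun 𝔥 y)⁻¹) (g := fun y => y) ?_ ?_
    · exact (hgc.continuousOn).inv₀ fun y hy =>
        ne_of_gt (aux_gfun_pos h_cont h_pos (aux_sphere_ne hy))
    · exact continuousOn_id
  constructor
  · rw [himg]
    exact (isConnected_sphere aux_rank 0 zero_le_one).image _ hFc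
  · rw [himg]
    exact (isCompact_sphere (0:E) 1).image_of_continuousOn hFc


lemma aux_gfun_nonneg (h_cont : Continuous 𝔥) (h_pos : ∀ v : E, v ≠ 0 → 0 < 𝔥 v) (x : E) :
    0 ≤ gfun 𝔥 x := by
  rcases eq_or_ne x 0 with rfl | hx
  · rw [aux_gfun_zero h_cont h_pos]
  · exact (aux_gfun_pos h_cont h_pos hx).le

lemma aux_triple (h_cont : Continuous 𝔥) (h_pos : ∀ v : E, v ≠ 0 → 0 < 𝔥 v)
    (h_homog : ∀ c : ℝ, 0 ≤ c → ∀ v : E, 𝔥 (c • v) = c * 𝔥 v)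
    (h_strict : ∀ t ∈ Set.Ioo (0:ℝ) 1, ∀ ν μ : E,
      ¬ ((∃ l : ℝ, 0 ≤ l ∧ ν = l • μ) ∨ (∃ l : ℝ, 0 ≤ l ∧ μ = l • ν)) →
      𝔥 (t • ν + (1 - t) • μ) < t * 𝔥 ν + (1 - t) * 𝔥 μ)
    (h_C1 : ContDiffOn ℝ 1 𝔥 {(0:E)}ᶜ) :
    ∃ x y z : E, x ≠ y ∧ x ≠ z ∧ y ≠ z ∧
      gfun 𝔥 x = 1 ∧ gfun 𝔥 y = 1 ∧ gfun 𝔥 z = 1 ∧ x + y + z = 0 := by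
  obtain ⟨hconn, hcomp⟩ := aux_Sg_conn h_cont h_pos
  have hmemSg : ∀ y : E, y ∈ {y : E | gfun 𝔥 y = 1} ↔ gfun 𝔥 y = 1 := fun y => Iff.rfl
  have hSne : (Metric.sphere (0:E) 1).Nonempty := NormedSpace.sphere_nonempty.mpr zero_le_one
  obtain ⟨v0, hv0⟩ := hSne
  have hSgne : {y : E | gfun 𝔥 y = 1}.Nonempty :=
    ⟨gradient 𝔥 v0, aux_gfun_grad h_cont h_pos h_homog h_strict h_C1 hv0⟩
  have hSg0 : ∀ y : E, gfun 𝔥 y = 1 → y ≠ 0 := by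
    intro y hy h0
    rw [h0, aux_gfun_zero h_cont h_pos] at hy; norm_num at hy
  have hscaleS : ∀ y : E, y ≠ 0 → gfun 𝔥 ((gfun 𝔥 y)⁻¹ • y) = 1 := by
    intro y hy
    have hgy := aux_gfun_pos h_cont h_pos hy
    rw [aux_gfun_smul h_cont h_pos y (inv_nonneg.mpr hgy.le), inv_mul_cancel₀ (ne_of_gt hgy)]
  have hscale : ∀ (z u : E) (M : ℝ), 0 ≤ M → (∀ y : E, gfun 𝔥 y = 1 → ⟪y, u⟫ ≤ M) →
      ⟪z, u⟫ ≤ gfun 𝔥 z * M := by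
    intro z u M hM hub
    rcases eq_or_ne z 0 with rfl | hz
    · rw [inner_zero_left, aux_gfun_zero h_cont h_pos, zero_mul]
    · have hgz := aux_gfun_pos h_cont h_pos hz
      have h1 := hub _ (hscaleS z hz)
      rw [real_inner_smul_left] at h1
      have h2 := mul_le_mul_of_nonneg_left h1 hgz.le
      rwa [← mul_assoc, mul_inv_cancel₀ (ne_of_gt hgz), one_mul] at h2
  -- minimal norm point
  obtain ⟨A₀, hA₀S, hA₀min⟩ := hcomp.exists_isMinOn hSgne continuous_norm.continuousOn
  have hA₀1 : gfun 𝔥 A₀ = 1 := hA₀S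
  have hA₀0 : A₀ ≠ 0 := hSg0 _ hA₀1
  have ha₀pos : 0 < gfun 𝔥 (-A₀) := aux_gfun_pos h_cont h_pos (neg_ne_zero.mpr hA₀0)
  have ha₀le : gfun 𝔥 (-A₀) ≤ 1 := by
    by_contra h
    push_neg at h
    have hyS := hscaleS (-A₀) (neg_ne_zero.mpr hA₀0)
    have hmin : ‖A₀‖ ≤ ‖(gfun 𝔥 (-A₀))⁻¹ • -A₀‖ := hA₀min hyS
    rw [norm_smul, norm_neg, Real.norm_eq_abs,
      abs_of_nonneg (inv_nonneg.mpr ha₀pos.le)] at hmin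
    have hnA : 0 < ‖A₀‖ := norm_pos_iff.mpr hA₀0
    have hinv := mul_inv_cancel₀ (ne_of_gt ha₀pos)
    nlinarith
  -- choice of A
  have hAex : ∃ A : E, gfun 𝔥 A = 1 ∧ gfun 𝔥 (-A) ≤ 1 ∧ gfun 𝔥 (-A) ≠ 1/2 := by
    rcases ne_or_eq (gfun 𝔥 (-A₀)) (1/2) with hne | heq
    · exact ⟨A₀, hA₀1, ha₀le, hne⟩
    · have hB₀S : gfun 𝔥 ((2:ℝ) • (-A₀)) = 1 := by
        rw [aux_gfun_smul h_cont h_pos _ (by norm_num : (0:ℝ) ≤ 2), heq]; norm_num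
      have hψB : gfun 𝔥 (-((2:ℝ) • (-A₀))) = 2 := by
        rw [show -((2:ℝ) • (-A₀)) = (2:ℝ) • A₀ by module,
          aux_gfun_smul h_cont h_pos _ (by norm_num : (0:ℝ) ≤ 2), hA₀1]; norm_num
      have hψcont : ContinuousOn (fun y : E => gfun 𝔥 (-y)) {y : E | gfun 𝔥 y = 1} :=
        ((aux_gfun_cont h_cont h_pos).comp continuous_neg).continuousOn
      have hIcc := hconn.isPreconnected.intermediate_value hA₀S hB₀S hψcont
      have h1 : (1:ℝ) ∈ Icc (gfun 𝔥 (-A₀)) (gfun 𝔥 (-((2:ℝ) • (-A₀)))) := by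
        rw [heq, hψB]; constructor <;> norm_num
      obtain ⟨A, hAS, hA⟩ := hIcc h1
      have hA' : gfun 𝔥 (-A) = 1 := hA
      exact ⟨A, hAS, le_of_eq hA', by rw [hA']; norm_num⟩
  obtain ⟨A, hA1, haa, hane⟩ := hAex
  have hA0 : A ≠ 0 := hSg0 _ hA1
  have hnA0 : -A ≠ 0 := neg_ne_zero.mpr hA0
  have hapos : 0 < gfun 𝔥 (-A) := aux_gfun_pos h_cont h_pos hnA0
  have hainv := mul_inv_cancel₀ (ne_of_gt hapos)
  have hainvpos : 0 < (gfun 𝔥 (-A))⁻¹ := inv_pos.mpr hapos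
  have hainv1 : 1 ≤ (gfun 𝔥 (-A))⁻¹ := by nlinarith
  have hAA : 0 < ⟪A, A⟫ := by
    rw [real_inner_self_eq_norm_sq]
    exact pow_pos (norm_pos_iff.mpr hA0) 2
  -- witness y₁ with gfun(-A - y₁) ≤ 1
  have hy₁ex : ∃ y₁ : E, gfun 𝔥 y₁ = 1 ∧ gfun 𝔥 (-A - y₁) ≤ 1 := by
    rcases lt_or_gt_of_ne hane with hlt | hgt
    · have h2a : (1:ℝ) ≤ 2 / gfun 𝔥 (-A) := by rw [le_div_iff₀ hapos]; linarith
      have hξcont : ContinuousOn (fun s : ℝ => gfun 𝔥 (-A + (s/2) • A))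
          (Icc 1 (2 / gfun 𝔥 (-A))) := by
        apply Continuous.continuousOn
        exact (aux_gfun_cont h_cont h_pos).comp
          (continuous_const.add
            (((continuous_id : Continuous (id : ℝ → ℝ)).div_const (2:ℝ)).smul continuous_const))
      have hξ1 : gfun 𝔥 (-A + ((1:ℝ)/2) • A) = gfun 𝔥 (-A) / 2 := by
        rw [show -A + ((1:ℝ)/2) • A = (1/2 : ℝ) • (-A) by module,
          aux_gfun_smul h_cont h_pos _ (by norm_num : (0:ℝ) ≤ 1/2)]
        linarith
      have hξe : gfun 𝔥 (-A + ((2 / gfun 𝔥 (-A))/2) • A) = (gfun 𝔥 (-A))⁻¹ - 1 := by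
        have hs : (2 / gfun 𝔥 (-A))/2 = (gfun 𝔥 (-A))⁻¹ := by field_simp
        rw [hs, show -A + (gfun 𝔥 (-A))⁻¹ • A = ((gfun 𝔥 (-A))⁻¹ - 1) • A by module,
          aux_gfun_smul h_cont h_pos _ (by linarith : (0:ℝ) ≤ (gfun 𝔥 (-A))⁻¹ - 1), hA1,
          mul_one]
      have h1mem : (1:ℝ) ∈ Icc (gfun 𝔥 (-A + ((1:ℝ)/2) • A))
          (gfun 𝔥 (-A + ((2 / gfun 𝔥 (-A))/2) • A)) := by
        rw [hξ1, hξe]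
        constructor
        · linarith
        · nlinarith
      obtain ⟨s₀, hs₀mem, hs₀⟩ := intermediate_value_Icc h2a hξcont h1mem
      refine ⟨-A + (s₀/2) • A, hs₀, ?_⟩
      rw [show -A - (-A + (s₀/2) • A) = (s₀/2) • (-A) by module,
        aux_gfun_smul h_cont h_pos _ (by linarith [hs₀mem.1] : (0:ℝ) ≤ s₀/2)]
      have hs₀le : s₀ * gfun 𝔥 (-A) ≤ 2 := by
        have := hs₀mem.2
        rwa [le_div_iff₀ hapos] at this
      nlinarith
    · refine ⟨(gfun 𝔥 (-A))⁻¹ • (-A), hscaleS (-A) hnA0, ?_⟩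
      rw [show -A - (gfun 𝔥 (-A))⁻¹ • (-A) = ((gfun 𝔥 (-A))⁻¹ - 1) • A by module,
        aux_gfun_smul h_cont h_pos _ (by linarith : (0:ℝ) ≤ (gfun 𝔥 (-A))⁻¹ - 1), hA1,
        mul_one]
      nlinarith
  obtain ⟨y₁, hy₁S, hy₁⟩ := hy₁ex
  -- main existence
  have hexist : ∃ ys : E, gfun 𝔥 ys = 1 ∧ gfun 𝔥 (-A - ys) = 1 := by
    by_contra hno
    push_neg at hno
    have hφcont : ContinuousOn (fun y : E => gfun 𝔥 (-A - y)) {y : E | gfun 𝔥 y = 1} := by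
      apply Continuous.continuousOn
      exact (aux_gfun_cont h_cont h_pos).comp (continuous_const.sub continuous_id)
    have hall : ∀ y : E, gfun 𝔥 y = 1 → gfun 𝔥 (-A - y) < 1 := by
      intro y hy
      rcases (hno y hy).lt_or_gt with h' | h'
      · exact h'
      · exfalso
        have hIcc := hconn.isPreconnected.intermediate_value hy₁S hy hφcont
        obtain ⟨y', hy', hy'1⟩ := hIcc ⟨hy₁, h'.le⟩
        exact hno y' hy' hy'1
    obtain ⟨y₂, hy₂S, hy₂max⟩ := hcomp.exists_isMaxOn hSgne
      ((continuous_id.inner continuous_const).continuousOn :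
        ContinuousOn (fun y : E => ⟪y, A⟫) _)
    obtain ⟨y₃, hy₃S, hy₃max⟩ := hcomp.exists_isMaxOn hSgne
      ((continuous_id.inner continuous_const).continuousOn :
        ContinuousOn (fun y : E => ⟪y, -A⟫) _)
    have hm : ⟪A, A⟫ ≤ ⟪y₂, A⟫ := hy₂max hA1
    have hm' : (gfun 𝔥 (-A))⁻¹ * ⟪A, A⟫ ≤ ⟪y₃, -A⟫ := by
      have h : ⟪(gfun 𝔥 (-A))⁻¹ • -A, -A⟫ ≤ ⟪y₃, -A⟫ := hy₃max (hscaleS (-A) hnA0)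
      rwa [real_inner_smul_left, inner_neg_neg] at h
    have hm'pos : 0 < ⟪y₃, -A⟫ := lt_of_lt_of_le (mul_pos hainvpos hAA) hm'
    have hmpos : 0 < ⟪y₂, A⟫ := lt_of_lt_of_le hAA hm
    have hz2 : ⟪-A - y₂, -A⟫ = ⟪A, A⟫ + ⟪y₂, A⟫ := by
      rw [inner_sub_left, inner_neg_neg, inner_neg_right]; ring
    have hz2le : ⟪-A - y₂, -A⟫ ≤ gfun 𝔥 (-A - y₂) * ⟪y₃, -A⟫ :=
      hscale _ _ _ hm'pos.le (fun y hy => hy₃max hy)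
    have hg2 : gfun 𝔥 (-A - y₂) < 1 := hall y₂ hy₂S
    have hg2nn : 0 ≤ gfun 𝔥 (-A - y₂) := aux_gfun_nonneg h_cont h_pos _
    have hineq1 : ⟪A, A⟫ + ⟪y₂, A⟫ < ⟪y₃, -A⟫ := by nlinarith
    have hz3 : ⟪-A - y₃, A⟫ = ⟪y₃, -A⟫ - ⟪A, A⟫ := by
      rw [inner_sub_left, inner_neg_left, inner_neg_right]; ring
    have hz3le : ⟪-A - y₃, A⟫ ≤ gfun 𝔥 (-A - y₃) * ⟪y₂, A⟫ :=
      hscale _ _ _ hmpos.le (fun y hy => hy₂max hy)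
    have hg3 : gfun 𝔥 (-A - y₃) < 1 := hall y₃ hy₃S
    have hg3nn : 0 ≤ gfun 𝔥 (-A - y₃) := aux_gfun_nonneg h_cont h_pos _
    have hineq2 : ⟪y₃, -A⟫ - ⟪A, A⟫ < ⟪y₂, A⟫ := by nlinarith
    linarith
  obtain ⟨ys, hysS, hys⟩ := hexist
  refine ⟨A, ys, -A - ys, ?_, ?_, ?_, hA1, hysS, hys, by module⟩
  · intro h
    have h2 : -A - ys = (2:ℝ) • (-A) := by rw [← h]; module
    rw [h2, aux_gfun_smul h_cont h_pos _ (by norm_num : (0:ℝ) ≤ 2)] at hys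
    exact hane (by linarith)
  · intro h
    have h2 : ys = (2:ℝ) • (-A) := by
      apply eq_of_sub_eq_zero
      rw [show ys - (2:ℝ) • (-A) = A - (-A - ys) by module]
      exact sub_eq_zero_of_eq h
    rw [h2, aux_gfun_smul h_cont h_pos _ (by norm_num : (0:ℝ) ≤ 2)] at hysS
    exact hane (by linarith)
  · intro h
    have h2 : ys = (2⁻¹:ℝ) • (-A) := by
      have h3 : (2:ℝ) • ys = -A := by
        apply eq_of_sub_eq_zero
        rw [show (2:ℝ) • ys - (-A) = ys - (-A - ys) by module]
        exact sub_eq_zero_of_eq h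
      rw [← h3, smul_smul]
      norm_num
    rw [h2, aux_gfun_smul h_cont h_pos _ (by norm_num : (0:ℝ) ≤ 2⁻¹)] at hysS
    have : gfun 𝔥 (-A) = 2 := by linarith
    linarith

end Statement5Aux2

/-- Let `𝔥 : ℝ² → ℝ` be continuous, positively 1-homogeneous, positive
away from `0`, `C¹` on `ℝ² \ {0}`, and strictly convex. Then there exist three pairwise
distinct points `A, B, C` on the unit sphere `{v | 𝔥 v = 1}` such that
`∇𝔥 A + ∇𝔥 B + ∇𝔥 C = 0` (an admissible triple). -/
theorem statement_5 (𝔥 : EuclideanSpace ℝ (Fin 2) → ℝ)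
    (h_cont : Continuous 𝔥)
    (h_homog : ∀ c : ℝ, 0 ≤ c → ∀ v, 𝔥 (c • v) = c * 𝔥 v)
    (h_pos : ∀ v : EuclideanSpace ℝ (Fin 2), v ≠ 0 → 0 < 𝔥 v)
    (h_C1 : ContDiffOn ℝ 1 𝔥 {(0 : EuclideanSpace ℝ (Fin 2))}ᶜ)
    (h_strict : ∀ t ∈ Set.Ioo (0:ℝ) 1, ∀ ν μ : EuclideanSpace ℝ (Fin 2),
      ¬ ((∃ l : ℝ, 0 ≤ l ∧ ν = l • μ) ∨ (∃ l : ℝ, 0 ≤ l ∧ μ = l • ν)) →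
      𝔥 (t • ν + (1 - t) • μ) < t * 𝔥 ν + (1 - t) * 𝔥 μ) :
    ∃ A B C : EuclideanSpace ℝ (Fin 2), A ≠ B ∧ A ≠ C ∧ B ≠ C ∧
      𝔥 A = 1 ∧ 𝔥 B = 1 ∧ 𝔥 C = 1 ∧
      gradient 𝔥 A + gradient 𝔥 B + gradient 𝔥 C = 0 := by
  obtain ⟨x, y, z, hxy, hxz, hyz, hx1, hy1, hz1, hsum⟩ :=
    aux_triple h_cont h_pos h_homog h_strict h_C1
  obtain ⟨vx, hvxS, hvx⟩ := aux_gfun_eq_one h_cont h_pos h_homog h_C1 hx1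
  obtain ⟨vy, hvyS, hvy⟩ := aux_gfun_eq_one h_cont h_pos h_homog h_C1 hy1
  obtain ⟨vz, hvzS, hvz⟩ := aux_gfun_eq_one h_cont h_pos h_homog h_C1 hz1
  have hvx0 := aux_sphere_ne hvxS
  have hvy0 := aux_sphere_ne hvyS
  have hvz0 := aux_sphere_ne hvzS
  have hpx : 0 < 𝔥 vx := h_pos vx hvx0
  have hpy : 0 < 𝔥 vy := h_pos vy hvy0
  have hpz : 0 < 𝔥 vz := h_pos vz hvz0
  have hgx : gradient 𝔥 ((𝔥 vx)⁻¹ • vx) = x := by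
    rw [aux_grad_scale h_homog h_strict h_C1 hvx0 (inv_pos.mpr hpx)]
    exact hvx.symm
  have hgy : gradient 𝔥 ((𝔥 vy)⁻¹ • vy) = y := by
    rw [aux_grad_scale h_homog h_strict h_C1 hvy0 (inv_pos.mpr hpy)]
    exact hvy.symm
  have hgz : gradient 𝔥 ((𝔥 vz)⁻¹ • vz) = z := by
    rw [aux_grad_scale h_homog h_strict h_C1 hvz0 (inv_pos.mpr hpz)]
    exact hvz.symm
  refine ⟨(𝔥 vx)⁻¹ • vx, (𝔥 vy)⁻¹ • vy, (𝔥 vz)⁻¹ • vz, ?_, ?_, ?_, ?_, ?_, ?_, ?_⟩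
  · exact fun h => hxy (by rw [← hgx, ← hgy, h])
  · exact fun h => hxz (by rw [← hgx, ← hgz, h])
  · exact fun h => hyz (by rw [← hgy, ← hgz, h])
  · rw [h_homog _ (inv_pos.mpr hpx).le, inv_mul_cancel₀ (ne_of_gt hpx)]
  · rw [h_homog _ (inv_pos.mpr hpy).le, inv_mul_cancel₀ (ne_of_gt hpy)]
  · rw [h_homog _ (inv_pos.mpr hpz).le, inv_mul_cancel₀ (ne_of_gt hpz)]
  · rw [hgx, hgy, hgz]
    exact hsum
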